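/- Let X be a metric space, c ≥ 2, r : ℝ, D a multiset over X × Fin c, x : X, and y ∈ Fin c. Let a := rNN_r(D,x), s_l := s_l(N_r(D,x)), and let b be the largest label among those l ≠ a attaining the maximum of s_l over l ≠ a. Suppose a = y. Then for every natural number e and every multiset D* over X × Fin c with S(D,D*) ≤ e, if rNN_r(D*,x) ≠ y, then the number of elements with label a in the multiset difference N_r(D,x) − N_r(D*,x) is at least s_a − s_b − e + 𝟙(b < a) (an inequality of integers). -/

import Mathlib

/-- Poisoning size between two multisets: `max (card A) (card B) - card (A ∩ B)`. -/
noncomputable def pSize {α : Type*} (A B : Multiset α) : ℕ :=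
  haveI := Classical.decEq α
  max A.card B.card - (A ∩ B).card

/-- Number of votes for label `l` in a multiset of labeled examples (counted with
multiplicity). -/
def votes {X : Type*} {c : ℕ} (T : Multiset (X × Fin c)) (l : Fin c) : ℕ :=
  T.countP (fun p => p.2 = l)

/-- Tie-broken majority label: the largest label (in the order of `Fin c`) among the
labels attaining the maximum vote count. -/
noncomputable def majLabel {X : Type*} {c : ℕ} (hc : 0 < c) (T : Multiset (X × Fin c)) :
    Fin c :=
  (Finset.univ.filter (fun l : Fin c => ∀ l', votes T l' ≤ votes T l)).max'
    (by
      haveI : NeZero c := ⟨hc.ne'⟩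
      obtain ⟨b, -, hb⟩ := Finset.exists_max_image (Finset.univ : Finset (Fin c)) (votes T)
        Finset.univ_nonempty
      exact ⟨b, Finset.mem_filter.mpr ⟨Finset.mem_univ b, fun l' => hb l' (Finset.mem_univ l')⟩⟩)

/-- The largest label, among those `l ≠ a`, attaining the maximum of `s l` over `l ≠ a`. -/
noncomputable def secondLabel {c : ℕ} (hc : 2 ≤ c) (s : Fin c → ℕ) (a : Fin c) : Fin c :=
  (Finset.univ.filter (fun l : Fin c => l ≠ a ∧ ∀ l', l' ≠ a → s l' ≤ s l)).max'
    (by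
      have h1 : 1 < Fintype.card (Fin c) := by rw [Fintype.card_fin]; omega
      obtain ⟨l0, hl0⟩ := Fintype.exists_ne_of_one_lt_card h1 a
      have hne : (Finset.univ.filter (fun l : Fin c => l ≠ a)).Nonempty :=
        ⟨l0, Finset.mem_filter.mpr ⟨Finset.mem_univ _, hl0⟩⟩
      obtain ⟨b, hb, hbmax⟩ := Finset.exists_max_image _ s hne
      refine ⟨b, Finset.mem_filter.mpr ⟨Finset.mem_univ _, (Finset.mem_filter.mp hb).2, ?_⟩⟩
      intro l' hl'
      exact hbmax l' (Finset.mem_filter.mpr ⟨Finset.mem_univ _, hl'⟩))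

/-- Multiset difference (with classical decidable equality). -/
noncomputable def mdiff {α : Type*} (A B : Multiset α) : Multiset α :=
  haveI := Classical.decEq α
  A - B

/-- rNN neighbor multiset: training examples within distance `r` of the test input `x`. -/
noncomputable def Nr {X : Type*} [MetricSpace X] {c : ℕ} (r : ℝ)
    (D : Multiset (X × Fin c)) (x : X) : Multiset (X × Fin c) :=
  haveI : DecidablePred (fun p : X × Fin c => dist p.1 x ≤ r) := Classical.decPred _
  D.filter (fun p => dist p.1 x ≤ r)

/-- rNN prediction: tie-broken majority label among the rNN neighbors. -/
noncomputable def rNNpred {X : Type*} [MetricSpace X] {c : ℕ} (hc : 0 < c) (r : ℝ)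
    (D : Multiset (X × Fin c)) (x : X) : Fin c :=
  majLabel hc (Nr r D x)


section Helpers

lemma majFilter_nonempty {X : Type*} {c : ℕ} (hc : 0 < c) (T : Multiset (X × Fin c)) :
    (Finset.univ.filter (fun l : Fin c => ∀ l', votes T l' ≤ votes T l)).Nonempty := by
  haveI : NeZero c := ⟨hc.ne'⟩
  obtain ⟨b, -, hb⟩ := Finset.exists_max_image (Finset.univ : Finset (Fin c)) (votes T)
    Finset.univ_nonempty
  exact ⟨b, Finset.mem_filter.mpr ⟨Finset.mem_univ b, fun l' => hb l' (Finset.mem_univ l')⟩⟩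

lemma majLabel_le_votes {X : Type*} {c : ℕ} (hc : 0 < c) (T : Multiset (X × Fin c))
    (l : Fin c) : votes T l ≤ votes T (majLabel hc T) := by
  have h := Finset.max'_mem _ (majFilter_nonempty hc T)
  rw [Finset.mem_filter] at h
  exact h.2 l

lemma le_majLabel {X : Type*} {c : ℕ} (hc : 0 < c) (T : Multiset (X × Fin c))
    (l : Fin c) (h : ∀ l', votes T l' ≤ votes T l) : l ≤ majLabel hc T := by
  unfold majLabel
  exact Finset.le_max' _ _ (Finset.mem_filter.mpr ⟨Finset.mem_univ _, h⟩)

lemma secFilter_nonempty {c : ℕ} (hc : 2 ≤ c) (s : Fin c → ℕ) (a : Fin c) :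
    (Finset.univ.filter (fun l : Fin c => l ≠ a ∧ ∀ l', l' ≠ a → s l' ≤ s l)).Nonempty := by
  have h1 : 1 < Fintype.card (Fin c) := by rw [Fintype.card_fin]; omega
  obtain ⟨l0, hl0⟩ := Fintype.exists_ne_of_one_lt_card h1 a
  have hne : (Finset.univ.filter (fun l : Fin c => l ≠ a)).Nonempty :=
    ⟨l0, Finset.mem_filter.mpr ⟨Finset.mem_univ _, hl0⟩⟩
  obtain ⟨b, hb, hbmax⟩ := Finset.exists_max_image _ s hne
  refine ⟨b, Finset.mem_filter.mpr ⟨Finset.mem_univ _, (Finset.mem_filter.mp hb).2, ?_⟩⟩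
  intro l' hl'
  exact hbmax l' (Finset.mem_filter.mpr ⟨Finset.mem_univ _, hl'⟩)

lemma secondLabel_ne {c : ℕ} (hc : 2 ≤ c) (s : Fin c → ℕ) (a : Fin c) :
    secondLabel hc s a ≠ a := by
  have h := Finset.max'_mem _ (secFilter_nonempty hc s a)
  rw [Finset.mem_filter] at h
  exact h.2.1

lemma votes_le_secondLabel {c : ℕ} (hc : 2 ≤ c) (s : Fin c → ℕ) (a l : Fin c)
    (hl : l ≠ a) : s l ≤ s (secondLabel hc s a) := by
  have h := Finset.max'_mem _ (secFilter_nonempty hc s a)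
  rw [Finset.mem_filter] at h
  exact h.2.2 l hl

lemma le_secondLabel {c : ℕ} (hc : 2 ≤ c) (s : Fin c → ℕ) (a l : Fin c)
    (hl : l ≠ a) (h : ∀ l', l' ≠ a → s l' ≤ s l) : l ≤ secondLabel hc s a := by
  unfold secondLabel
  exact Finset.le_max' _ _ (Finset.mem_filter.mpr ⟨Finset.mem_univ _, hl, h⟩)

end Helpers

/-- if rNN correctly classifies `x` before the attack but misclassifies it
after poisoning at most `e` examples, then at least `s_a − s_b − e + 𝟙(b < a)` neighbors
with label `a` were removed. -/
theorem rnn_removed_votes_lower_bound {X : Type*} [MetricSpace X] {c : ℕ} (hc : 2 ≤ c)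
    (r : ℝ) (D : Multiset (X × Fin c)) (x : X) (y : Fin c) (a b : Fin c)
    (ha : a = rNNpred (by omega) r D x)
    (hb : b = secondLabel hc (fun l => votes (Nr r D x) l) a)
    (hay : a = y) (e : ℕ) (Dstar : Multiset (X × Fin c)) (hD : pSize D Dstar ≤ e)
    (hmis : rNNpred (by omega : 0 < c) r Dstar x ≠ y) :
    (votes (Nr r D x) a : ℤ) - (votes (Nr r D x) b : ℤ) - (e : ℤ) +
        (if b < a then 1 else 0) ≤
      (votes (mdiff (Nr r D x) (Nr r Dstar x)) a : ℤ) := by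
  letI := Classical.decEq (X × Fin c)
  have hc0 : 0 < c := by omega
  have haa' : rNNpred hc0 r Dstar x ≠ a := by rw [hay]; exact hmis
  have F1 : votes (Nr r Dstar x) (rNNpred hc0 r Dstar x) ≤
      votes (mdiff (Nr r Dstar x) (Nr r D x)) (rNNpred hc0 r Dstar x) +
        votes (Nr r D x) (rNNpred hc0 r Dstar x) := by
    unfold mdiff votes
    rw [← Multiset.countP_add]
    exact Multiset.countP_le_of_le _ le_tsub_add
  have F2 : votes (Nr r D x) a ≤
      votes (mdiff (Nr r D x) (Nr r Dstar x)) a + votes (Nr r Dstar x) a := by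
    unfold mdiff votes
    rw [← Multiset.countP_add]
    exact Multiset.countP_le_of_le _ le_tsub_add
  have F3 : votes (Nr r Dstar x) a ≤ votes (Nr r Dstar x) (rNNpred hc0 r Dstar x) :=
    majLabel_le_votes hc0 _ a
  have F3' : rNNpred hc0 r Dstar x < a →
      votes (Nr r Dstar x) a < votes (Nr r Dstar x) (rNNpred hc0 r Dstar x) := by
    intro hlt
    rcases lt_or_eq_of_le F3 with h | h
    · exact h
    · exfalso
      have : a ≤ rNNpred hc0 r Dstar x :=
        le_majLabel hc0 _ a (fun l' => h ▸ majLabel_le_votes hc0 _ l')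
      exact absurd this (not_le.mpr hlt)
  have F4 : votes (Nr r D x) (rNNpred hc0 r Dstar x) ≤ votes (Nr r D x) b := by
    rw [hb]
    exact votes_le_secondLabel hc _ a _ haa'
  have F4' : b < a → a < rNNpred hc0 r Dstar x →
      votes (Nr r D x) (rNNpred hc0 r Dstar x) < votes (Nr r D x) b := by
    intro hba hlt
    rcases lt_or_eq_of_le F4 with h | h
    · exact h
    · exfalso
      have hle : rNNpred hc0 r Dstar x ≤ b := by
        rw [hb] at h ⊢
        exact le_secondLabel hc _ a _ haa'
          (fun l' hl' => h ▸ votes_le_secondLabel hc _ a l' hl')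
      exact absurd (lt_trans hba (lt_of_lt_of_le hlt hle)) (lt_irrefl b)
  have F5 : votes (mdiff (Nr r Dstar x) (Nr r D x)) (rNNpred hc0 r Dstar x) ≤ e := by
    have h1 : mdiff (Nr r Dstar x) (Nr r D x) ≤ mdiff Dstar D := by
      unfold mdiff Nr
      rw [← Multiset.filter_sub]
      exact Multiset.filter_le _ _
    have h2 : Multiset.card (mdiff Dstar D) ≤ e := by
      unfold mdiff
      unfold pSize at hD
      refine le_trans ?_ hD
      rw [← Multiset.sub_inter, Multiset.card_sub Multiset.inter_le_left,
        Multiset.inter_comm]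
      exact Nat.sub_le_sub_right (le_max_right _ _) _
    calc votes (mdiff (Nr r Dstar x) (Nr r D x)) (rNNpred hc0 r Dstar x)
        ≤ Multiset.card (mdiff (Nr r Dstar x) (Nr r D x)) := Multiset.countP_le_card _ _
      _ ≤ Multiset.card (mdiff Dstar D) := Multiset.card_le_card h1
      _ ≤ e := h2
  have hbne : b ≠ a := by rw [hb]; exact secondLabel_ne hc _ a
  rcases lt_trichotomy (rNNpred hc0 r Dstar x) a with hlt | heq | hgt
  · have hs := F3' hlt
    rcases lt_or_gt_of_ne hbne with hba | hba
    · simp only [if_pos hba]; omega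
    · simp only [if_neg (not_lt.mpr (le_of_lt hba))]; omega
  · exact absurd heq haa'
  · rcases lt_or_gt_of_ne hbne with hba | hba
    · have hs := F4' hba hgt
      simp only [if_pos hba]; omega
    · simp only [if_neg (not_lt.mpr (le_of_lt hba))]; omega
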